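/- For every natural number n, ∑_{k=0}^{n} C(2k, k) · C(2(n−k), n−k) = 4^n, where C(m, j) denotes the binomial coefficient. Equivalently, the generating function ∑_{n≥0} C(2n,n)·z^n of the central binomial coefficients squares to 1/(1 − 4z): (1 − 4X)·(∑_{n≥0} C(2n,n)·X^n)² = 1 in ℤ⟦X⟧. -/

import Mathlib

open Finset

private def a (k : ℕ) : ℕ := (2 * k).choose k

private def S (n : ℕ) : ℕ := ∑ k ∈ range (n + 1), a k * a (n - k)

private lemma symm_sum (n : ℕ) :
    ∑ k ∈ range (n + 1), 2 * k * (a k * a (n - k)) = n * S n := by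
  have hrefl : ∑ k ∈ range (n + 1), (n - k) * (a k * a (n - k)) =
      ∑ k ∈ range (n + 1), k * (a k * a (n - k)) := by
    have h := Finset.sum_range_reflect (fun k => k * (a k * a (n - k))) (n + 1)
    rw [← h]
    apply Finset.sum_congr rfl
    intro k hk
    have hk' : k ≤ n := Nat.lt_succ_iff.mp (Finset.mem_range.mp hk)
    have e1 : n + 1 - 1 - k = n - k := by omega
    have e2 : n - (n - k) = k := by omega
    rw [e1, e2]; ring
  have lhs : ∑ k ∈ range (n + 1), 2 * k * (a k * a (n - k)) =
      ∑ k ∈ range (n + 1), k * (a k * a (n - k)) +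
      ∑ k ∈ range (n + 1), (n - k) * (a k * a (n - k)) := by
    rw [hrefl, ← two_mul, Finset.mul_sum]
    apply Finset.sum_congr rfl
    intro k _; ring
  rw [lhs, ← Finset.sum_add_distrib]
  rw [S, Finset.mul_sum]
  apply Finset.sum_congr rfl
  intro k hk
  have hk' : k ≤ n := Nat.lt_succ_iff.mp (Finset.mem_range.mp hk)
  have : k + (n - k) = n := by omega
  rw [← add_mul, this]

private lemma S_succ (n : ℕ) : S (n + 1) = 4 * S n := by
  have hrec : ∀ j : ℕ, (j + 1) * a (j + 1) = 2 * (2 * j + 1) * a j := by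
    intro j
    have := Nat.succ_mul_centralBinom_succ j
    simpa [a, Nat.centralBinom] using this
  -- (n+1) * S (n+1) = 2 * ∑_{k ∈ range (n+2)} k * t_k
  have h1 : (n + 1) * S (n + 1) =
      ∑ k ∈ range (n + 2), 2 * k * (a k * a (n + 1 - k)) := (symm_sum (n + 1)).symm
  -- shift index: the k = 0 term vanishes
  have h2 : ∑ k ∈ range (n + 2), 2 * k * (a k * a (n + 1 - k)) =
      ∑ j ∈ range (n + 1), 2 * (j + 1) * (a (j + 1) * a (n - j)) := by
    rw [Finset.sum_range_succ'] 
    simp only [Nat.mul_zero, Nat.zero_mul, mul_zero, zero_mul, add_zero]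
    apply Finset.sum_congr rfl
    intro j hj
    have hj' : j ≤ n := Nat.lt_succ_iff.mp (Finset.mem_range.mp hj)
    have : n + 1 - (j + 1) = n - j := by omega
    rw [this]
  have h3 : ∀ j, 2 * (j + 1) * (a (j + 1) * a (n - j)) =
      2 * (2 * (2 * j + 1) * a j) * a (n - j) := by
    intro j
    have := hrec j
    calc 2 * (j + 1) * (a (j + 1) * a (n - j))
        = 2 * ((j + 1) * a (j + 1)) * a (n - j) := by ring
      _ = 2 * (2 * (2 * j + 1) * a j) * a (n - j) := by rw [this]
  have h4 : ∑ j ∈ range (n + 1), 2 * (j + 1) * (a (j + 1) * a (n - j)) =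
      4 * (∑ j ∈ range (n + 1), 2 * j * (a j * a (n - j))) + 4 * S n := by
    calc ∑ j ∈ range (n + 1), 2 * (j + 1) * (a (j + 1) * a (n - j))
        = ∑ j ∈ range (n + 1),
            (4 * (2 * j * (a j * a (n - j))) + 4 * (a j * a (n - j))) := by
          apply Finset.sum_congr rfl
          intro j _
          rw [h3 j]; ring
      _ = 4 * (∑ j ∈ range (n + 1), 2 * j * (a j * a (n - j))) + 4 * S n := by
          rw [Finset.sum_add_distrib, Finset.mul_sum, S, Finset.mul_sum]
  have h5 : (n + 1) * S (n + 1) = (n + 1) * (4 * S n) := by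
    rw [h1, h2, h4, symm_sum n]; ring
  exact Nat.eq_of_mul_eq_mul_left (Nat.succ_pos n) h5

private lemma S_eq (n : ℕ) : S n = 4 ^ n := by
  induction n with
  | zero => simp [S, a]
  | succ n ih => rw [S_succ, ih, pow_succ]; ring

theorem stmt12 :
    (∀ n : ℕ, ∑ k ∈ Finset.range (n + 1),
        (2 * k).choose k * (2 * (n - k)).choose (n - k) = 4 ^ n) ∧
      (1 - 4 * PowerSeries.X) *
        (PowerSeries.mk fun n => ((2 * n).choose n : ℤ)) ^ 2 = 1 := by
  have hsum : ∀ n : ℕ, ∑ k ∈ Finset.range (n + 1),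
      (2 * k).choose k * (2 * (n - k)).choose (n - k) = 4 ^ n := fun n => S_eq n
  refine ⟨hsum, ?_⟩
  set f : PowerSeries ℤ := PowerSeries.mk fun n => ((2 * n).choose n : ℤ) with hf
  have hcoeff : ∀ n : ℕ, PowerSeries.coeff n (f ^ 2) = 4 ^ n := by
    intro n
    rw [sq, PowerSeries.coeff_mul, Finset.Nat.sum_antidiagonal_eq_sum_range_succ_mk]
    simp only [hf, PowerSeries.coeff_mk]
    exact_mod_cast hsum n
  ext n
  rw [sub_mul, one_mul, mul_assoc, PowerSeries.coeff_one, map_sub]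
  rcases n with _ | m
  · simp [hcoeff 0, PowerSeries.coeff_zero_eq_constantCoeff]
  · have h4 : (4 : PowerSeries ℤ) = PowerSeries.C (R := ℤ) 4 := by
      simp [Nat.cast_ofNat, map_ofNat]
    rw [h4, PowerSeries.coeff_C_mul, PowerSeries.coeff_succ_X_mul, hcoeff, hcoeff,
      if_neg (Nat.succ_ne_zero m)]
    ring
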